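/- Let X, Y : [0,t] → ℝ be continuous with X(0) = Y(0) = 0. Then inf_{0≤s≤t} ( X(s) + inf_{0≤u≤s} Y(u) ) = inf_{0≤s≤t} X(s) + inf_{0≤s≤t} [ X(s) − 2 inf_{0≤u≤s} X(u) + inf_{0≤u≤s} ( Y(u) + inf_{0≤v≤u} X(v) ) ]. -/

import Mathlib

/-- Lemma 2.6 of Biane–Bougerol–O'Connell: for continuous `X, Y : [0,t] → ℝ` with
`X 0 = Y 0 = 0`,
`inf_{0≤s≤t} (X s + inf_{0≤u≤s} Y u)
  = inf_{0≤s≤t} X s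
    + inf_{0≤s≤t} (X s − 2 inf_{0≤u≤s} X u + inf_{0≤u≤s} (Y u + inf_{0≤v≤u} X v))`. -/
theorem pitman_fundamental_lemma
    (t : ℝ) (ht : 0 < t) (X Y : ℝ → ℝ)
    (hX : ContinuousOn X (Set.Icc 0 t)) (hY : ContinuousOn Y (Set.Icc 0 t))
    (hX0 : X 0 = 0) (hY0 : Y 0 = 0) :
    sInf ((fun s => X s + sInf (Y '' Set.Icc 0 s)) '' Set.Icc 0 t)
      = sInf (X '' Set.Icc 0 t)
        + sInf ((fun s => X s - 2 * sInf (X '' Set.Icc 0 s)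
            + sInf ((fun u => Y u + sInf (X '' Set.Icc 0 u)) '' Set.Icc 0 s)) ''
            Set.Icc 0 t) := by
  classical
  set mX : ℝ → ℝ := fun s => sInf (X '' Set.Icc 0 s) with hmXdef
  set mY : ℝ → ℝ := fun s => sInf (Y '' Set.Icc 0 s) with hmYdef
  set Z : ℝ → ℝ := fun s => sInf ((fun u => Y u + mX u) '' Set.Icc 0 s) with hZdef
  -- basic facts about images
  have hXbt : BddBelow (X '' Set.Icc 0 t) := isCompact_Icc.bddBelow_image hX
  have hYbt : BddBelow (Y '' Set.Icc 0 t) := isCompact_Icc.bddBelow_image hY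
  have hXb : ∀ s ∈ Set.Icc (0:ℝ) t, BddBelow (X '' Set.Icc 0 s) := fun s hs =>
    hXbt.mono (Set.image_mono (Set.Icc_subset_Icc le_rfl hs.2))
  have hYb : ∀ s ∈ Set.Icc (0:ℝ) t, BddBelow (Y '' Set.Icc 0 s) := fun s hs =>
    hYbt.mono (Set.image_mono (Set.Icc_subset_Icc le_rfl hs.2))
  have hXne : ∀ s : ℝ, 0 ≤ s → (X '' Set.Icc 0 s).Nonempty := fun s hs =>
    ⟨X 0, ⟨0, ⟨le_rfl, hs⟩, rfl⟩⟩
  have hYne : ∀ s : ℝ, 0 ≤ s → (Y '' Set.Icc 0 s).Nonempty := fun s hs =>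
    ⟨Y 0, ⟨0, ⟨le_rfl, hs⟩, rfl⟩⟩
  -- mX s ≤ X v for v ∈ [0,s]
  have hmXle : ∀ s ∈ Set.Icc (0:ℝ) t, ∀ v ∈ Set.Icc (0:ℝ) s, mX s ≤ X v := by
    intro s hs v hv
    exact csInf_le (hXb s hs) ⟨v, hv, rfl⟩
  have hmYle : ∀ s ∈ Set.Icc (0:ℝ) t, ∀ v ∈ Set.Icc (0:ℝ) s, mY s ≤ Y v := by
    intro s hs v hv
    exact csInf_le (hYb s hs) ⟨v, hv, rfl⟩
  -- monotonicity of mX, mY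
  have hmXmono : ∀ u s : ℝ, 0 ≤ u → u ≤ s → s ≤ t → mX s ≤ mX u := by
    intro u s hu hus hst
    exact csInf_le_csInf (hXb s ⟨le_trans hu hus, hst⟩) (hXne u hu)
      (Set.image_mono (Set.Icc_subset_Icc le_rfl hus))
  have hmYmono : ∀ u s : ℝ, 0 ≤ u → u ≤ s → s ≤ t → mY s ≤ mY u := by
    intro u s hu hus hst
    exact csInf_le_csInf (hYb s ⟨le_trans hu hus, hst⟩) (hYne u hu)
      (Set.image_mono (Set.Icc_subset_Icc le_rfl hus))
  -- mX t is a lower bound everywhere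
  have hmXt_le : ∀ v ∈ Set.Icc (0:ℝ) t, mX t ≤ X v := hmXle t ⟨le_of_lt ht, le_rfl⟩
  have hmYt_le : ∀ v ∈ Set.Icc (0:ℝ) t, mY t ≤ Y v := hmYle t ⟨le_of_lt ht, le_rfl⟩
  -- mX s ≤ 0
  have hmX0 : ∀ s ∈ Set.Icc (0:ℝ) t, mX s ≤ 0 := by
    intro s hs
    have := hmXle s hs 0 ⟨le_rfl, hs.1⟩
    simpa [hX0] using this
  -- mX t ≤ mX s for s ∈ [0,t]
  have hmXts : ∀ s ∈ Set.Icc (0:ℝ) t, mX t ≤ mX s := fun s hs =>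
    hmXmono s t hs.1 hs.2 le_rfl
  -- Z : bddBelow and basic bound
  have hZptwise : ∀ u ∈ Set.Icc (0:ℝ) t, mY t + mX t ≤ Y u + mX u := by
    intro u hu
    have h1 := hmYt_le u hu
    have h2 := hmXmono u t hu.1 hu.2 le_rfl
    linarith
  have hZb : ∀ s ∈ Set.Icc (0:ℝ) t, BddBelow ((fun u => Y u + mX u) '' Set.Icc 0 s) := by
    intro s hs
    refine ⟨mY t + mX t, ?_⟩
    rintro x ⟨u, hu, rfl⟩
    exact hZptwise u ⟨hu.1, le_trans hu.2 hs.2⟩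
  have hZne : ∀ s : ℝ, 0 ≤ s → ((fun u => Y u + mX u) '' Set.Icc 0 s).Nonempty := fun s hs =>
    ⟨Y 0 + mX 0, ⟨0, ⟨le_rfl, hs⟩, rfl⟩⟩
  have hZle : ∀ s ∈ Set.Icc (0:ℝ) t, ∀ u ∈ Set.Icc (0:ℝ) s, Z s ≤ Y u + mX u := by
    intro s hs u hu
    exact csInf_le (hZb s hs) ⟨u, hu, rfl⟩
  have hZlb : ∀ s ∈ Set.Icc (0:ℝ) t, mY t + mX t ≤ Z s := by
    intro s hs
    refine le_csInf (hZne s hs.1) ?_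
    rintro x ⟨u, hu, rfl⟩
    exact hZptwise u ⟨hu.1, le_trans hu.2 hs.2⟩
  -- nonempty/bddBelow for the two outer images
  have hLne : ((fun s => X s + mY s) '' Set.Icc 0 t).Nonempty :=
    ⟨X 0 + mY 0, ⟨0, ⟨le_rfl, le_of_lt ht⟩, rfl⟩⟩
  have hRne : ((fun s => X s - 2 * mX s + Z s) '' Set.Icc 0 t).Nonempty :=
    ⟨X 0 - 2 * mX 0 + Z 0, ⟨0, ⟨le_rfl, le_of_lt ht⟩, rfl⟩⟩
  have hLb : BddBelow ((fun s => X s + mY s) '' Set.Icc 0 t) := by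
    refine ⟨mX t + mY t, ?_⟩
    rintro x ⟨s, hs, rfl⟩
    have h1 := hmXt_le s hs
    have h2 := hmYmono s t hs.1 hs.2 le_rfl
    dsimp only
    linarith
  have hRb : BddBelow ((fun s => X s - 2 * mX s + Z s) '' Set.Icc 0 t) := by
    refine ⟨mX t + (mY t + mX t), ?_⟩
    rintro x ⟨s, hs, rfl⟩
    have h1 := hmXt_le s hs
    have h2 := hmX0 s hs
    have h3 := hZlb s hs
    dsimp only
    linarith
  -- global minimizer of X
  obtain ⟨r, hr, hrmin⟩ := isCompact_Icc.exists_isMinOn (Set.nonempty_Icc.2 (le_of_lt ht)) hX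
  have hXr : X r = mX t := by
    refine le_antisymm ?_ (hmXt_le r hr)
    refine le_csInf (hXne t (le_of_lt ht)) ?_
    rintro x ⟨v, hv, rfl⟩
    exact hrmin hv
  refine le_antisymm ?_ ?_
  · -- LHS ≤ mX t + sInf R
    have key : ∀ s ∈ Set.Icc (0:ℝ) t,
        sInf ((fun s => X s + mY s) '' Set.Icc 0 t) ≤ mX t + (X s - 2 * mX s + Z s) := by
      intro s hs
      refine le_of_forall_pos_le_add ?_
      intro ε hε
      -- pick u* with Y u* + mX u* < Z s + ε
      have hzlt : Z s < Z s + ε := by linarith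
      obtain ⟨x, ⟨u, hu, rfl⟩, hxlt⟩ := exists_lt_of_csInf_lt (hZne s hs.1) hzlt
      have hu0t : u ∈ Set.Icc (0:ℝ) t := ⟨hu.1, le_trans hu.2 hs.2⟩
      have hmXus : mX s ≤ mX u := hmXmono u s hu.1 hu.2 hs.2
      rcases le_or_gt (mX s) (mX t) with h1 | h2
      · have hmem : sInf ((fun s => X s + mY s) '' Set.Icc 0 t) ≤ X s + mY s :=
          csInf_le hLb ⟨s, hs, rfl⟩
        have hYu : mY s ≤ Y u := hmYle s hs u hu
        dsimp only at hxlt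
        linarith
      · -- global min attained after s
        have hsr : s ≤ r := by
          by_contra hcon
          push_neg at hcon
          have : mX s ≤ X r := hmXle s hs r ⟨hr.1, le_of_lt hcon⟩
          rw [hXr] at this
          linarith
        have hmem : sInf ((fun s => X s + mY s) '' Set.Icc 0 t) ≤ X r + mY r :=
          csInf_le hLb ⟨r, hr, rfl⟩
        have hYu : mY r ≤ Y u := hmYle r hr u ⟨hu.1, le_trans hu.2 hsr⟩
        have hXs : mX s ≤ X s := hmXle s hs s ⟨hs.1, le_rfl⟩
        dsimp only at hxlt
        rw [hXr] at hmem
        linarith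
    have : sInf ((fun s => X s + mY s) '' Set.Icc 0 t) - mX t
        ≤ sInf ((fun s => X s - 2 * mX s + Z s) '' Set.Icc 0 t) := by
      refine le_csInf hRne ?_
      rintro x ⟨s, hs, rfl⟩
      have := key s hs
      dsimp only
      linarith
    linarith
  · -- mX t + sInf R ≤ LHS
    refine le_csInf hLne ?_
    rintro x ⟨s, hs, rfl⟩
    dsimp only
    -- minimizer of Y on [0,s]
    obtain ⟨u, hu, humin⟩ := isCompact_Icc.exists_isMinOn (Set.nonempty_Icc.2 hs.1)
      (hY.mono (Set.Icc_subset_Icc le_rfl hs.2))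
    have hYu : Y u = mY s := by
      refine le_antisymm ?_ (hmYle s hs u hu)
      refine le_csInf (hYne s hs.1) ?_
      rintro x ⟨v, hv, rfl⟩
      exact humin hv
    have hu0t : u ∈ Set.Icc (0:ℝ) t := ⟨hu.1, le_trans hu.2 hs.2⟩
    -- minimizer of X on [u,t]
    obtain ⟨s₁, hs₁, hs₁min⟩ := isCompact_Icc.exists_isMinOn (Set.nonempty_Icc.2 hu0t.2)
      (hX.mono (Set.Icc_subset_Icc hu0t.1 le_rfl))
    have hs₁0t : s₁ ∈ Set.Icc (0:ℝ) t := ⟨le_trans hu0t.1 hs₁.1, hs₁.2⟩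
    have hXs₁s : X s₁ ≤ X s := hs₁min ⟨hu.2, hs.2⟩
    have main : mX t + sInf ((fun s => X s - 2 * mX s + Z s) '' Set.Icc 0 t)
        ≤ X s₁ + Y u := by
      rcases le_or_gt (mX u) (mX t) with hA | hB
      · -- Case A : everything equal
        have e1 : mX s₁ ≤ mX u := hmXmono u s₁ hu0t.1 hs₁.1 hs₁0t.2
        have e2 : mX t ≤ mX s₁ := hmXts s₁ hs₁0t
        have hmem : sInf ((fun s => X s - 2 * mX s + Z s) '' Set.Icc 0 t)
            ≤ X s₁ - 2 * mX s₁ + Z s₁ := csInf_le hRb ⟨s₁, hs₁0t, rfl⟩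
        have hz : Z s₁ ≤ Y u + mX u := hZle s₁ hs₁0t u ⟨hu0t.1, hs₁.1⟩
        linarith
      · -- Case B : global min after u, use first hitting of level mX u
        have hur : u ≤ r := by
          by_contra hcon
          push_neg at hcon
          have : mX u ≤ X r := hmXle u hu0t r ⟨hr.1, le_of_lt hcon⟩
          rw [hXr] at this
          linarith
        have hXs₁ : X s₁ = mX t := by
          refine le_antisymm ?_ (hmXt_le s₁ hs₁0t)
          have h2 : X s₁ ≤ X r := hs₁min ⟨hur, hr.2⟩
          rwa [hXr] at h2
        -- X u ≥ mX u
        have hXu : mX u ≤ X u := hmXle u hu0t u ⟨hu0t.1, le_rfl⟩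
        have hus₁ : u ≤ s₁ := hs₁.1
        have hXcont₁ : ContinuousOn X (Set.Icc u s₁) :=
          hX.mono (Set.Icc_subset_Icc hu0t.1 hs₁0t.2)
        -- IVT: there is w ∈ [u,s₁] with X w = mX u
        have hivt : Set.Icc (X s₁) (X u) ⊆ X '' Set.Icc u s₁ :=
          intermediate_value_Icc' hus₁ hXcont₁
        have hmXuIn : mX u ∈ Set.Icc (X s₁) (X u) := ⟨by rw [hXs₁]; linarith, hXu⟩
        obtain ⟨w, hw, hXw⟩ := hivt hmXuIn
        -- first hitting time
        set S : Set ℝ := Set.Icc u s₁ ∩ X ⁻¹' {mX u} with hSdef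
        have hSne : S.Nonempty := ⟨w, hw, hXw⟩
        have hSb : BddBelow S := ⟨u, fun v hv => hv.1.1⟩
        have hScl : IsClosed S :=
          hXcont₁.preimage_isClosed_of_isClosed isClosed_Icc isClosed_singleton
        have hs' : sInf S ∈ S := hScl.csInf_mem hSne hSb
        set s' : ℝ := sInf S with hs'def
        have hXs' : X s' = mX u := hs'.2
        have hs'Icc : s' ∈ Set.Icc u s₁ := hs'.1
        have hs'0t : s' ∈ Set.Icc (0:ℝ) t := ⟨le_trans hu0t.1 hs'Icc.1, le_trans hs'Icc.2 hs₁0t.2⟩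
        -- no earlier dip below mX u on [u, s']
        have hnodip : ∀ v ∈ Set.Icc u s', mX u ≤ X v := by
          intro v hv
          by_contra hcon
          push_neg at hcon
          have hvs₁ : v ∈ Set.Icc u s₁ := ⟨hv.1, le_trans hv.2 hs'Icc.2⟩
          have hivt2 : Set.Icc (X v) (X u) ⊆ X '' Set.Icc u v :=
            intermediate_value_Icc' hv.1 (hXcont₁.mono (Set.Icc_subset_Icc le_rfl hvs₁.2))
          obtain ⟨w', hw', hXw'⟩ := hivt2 ⟨le_of_lt hcon, hXu⟩
          have hw'S : w' ∈ S := ⟨⟨hw'.1, le_trans hw'.2 hvs₁.2⟩, hXw'⟩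
          have : s' ≤ w' := csInf_le hSb hw'S
          have hvne : v ≠ s' := by
            intro h
            rw [h, hXs'] at hcon
            exact lt_irrefl _ hcon
          have : s' ≤ v := le_trans this hw'.2
          have : v = s' := le_antisymm hv.2 this
          exact hvne this
        -- mX s' = mX u
        have hmXs' : mX s' = mX u := by
          refine le_antisymm (hmXmono u s' hu0t.1 hs'Icc.1 hs'0t.2) ?_
          refine le_csInf (hXne s' hs'0t.1) ?_
          rintro x ⟨v, hv, rfl⟩
          rcases le_or_gt v u with h | h
          · exact hmXle u hu0t v ⟨hv.1, h⟩
          · exact hnodip v ⟨le_of_lt h, hv.2⟩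
        have hmem : sInf ((fun s => X s - 2 * mX s + Z s) '' Set.Icc 0 t)
            ≤ X s' - 2 * mX s' + Z s' := csInf_le hRb ⟨s', hs'0t, rfl⟩
        have hz : Z s' ≤ Y u + mX u := hZle s' hs'0t u ⟨hu0t.1, hs'Icc.1⟩
        rw [hXs₁]
        rw [hXs', hmXs'] at hmem
        linarith
    rw [hYu] at main
    linarith
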